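/- Let n ≥ 3 be an integer, H a real constant, and let (x, y, θ) : I → ℝ³ be a Delaunay generating curve, i.e. a C¹ map on a real interval I with y(t) > 0 for all t, satisfying x' = cos θ, y' = sin θ, θ' = −(n−1)H + (n−2)·cos θ / y. Then the force F(t) = y(t)^{n−2}·(cos θ(t) − H·y(t)) is constant on I. -/

import Mathlib

open Real Set

/-- For a Delaunay generating curve `(x, y, θ)` on an interval `I`
(a C¹ solution of the ODE system `x' = cos θ`, `y' = sin θ`,
`θ' = -(n-1)H + (n-2) cos θ / y` with `y > 0`), the force
`F(t) = y(t)^(n-2) (cos θ(t) - H y(t))` is constant on `I`. -/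
theorem force_is_constant
    (n : ℕ) (hn : 3 ≤ n) (H : ℝ) (I : Set ℝ) (hI : I.OrdConnected)
    (x y θ : ℝ → ℝ)
    (hypos : ∀ t ∈ I, 0 < y t)
    (hx : ∀ t ∈ I, HasDerivWithinAt x (Real.cos (θ t)) I t)
    (hy : ∀ t ∈ I, HasDerivWithinAt y (Real.sin (θ t)) I t)
    (hθ : ∀ t ∈ I, HasDerivWithinAt θ
      (-((n : ℝ) - 1) * H + ((n : ℝ) - 2) * Real.cos (θ t) / y t) I t) :
    ∀ s ∈ I, ∀ t ∈ I,
      y s ^ (n - 2) * (Real.cos (θ s) - H * y s)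
        = y t ^ (n - 2) * (Real.cos (θ t) - H * y t) := by
  obtain ⟨k, rfl⟩ : ∃ k, n = k + 3 := ⟨n - 3, by omega⟩
  have hconv : Convex ℝ I := convex_iff_ordConnected.mpr hI
  have hF : ∀ u ∈ I, HasDerivWithinAt
      (fun t => y t ^ (k + 3 - 2) * (Real.cos (θ t) - H * y t)) 0 I u := by
    intro u hu
    have hyu := hypos u hu
    have h1 : HasDerivWithinAt (fun t => y t ^ (k + 3 - 2))
        (((k + 3 - 2 : ℕ) : ℝ) * y u ^ (k + 3 - 2 - 1) * Real.sin (θ u)) I u :=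
      (hy u hu).pow _
    have h2 : HasDerivWithinAt (fun t => Real.cos (θ t) - H * y t)
        (-Real.sin (θ u) * (-(((k + 3 : ℕ) : ℝ) - 1) * H
          + (((k + 3 : ℕ) : ℝ) - 2) * Real.cos (θ u) / y u)
          - H * Real.sin (θ u)) I u :=
      ((hθ u hu).cos).sub ((hy u hu).const_mul H)
    have h3 := h1.mul h2
    refine h3.congr_deriv ?_; symm
    have hk2 : k + 3 - 2 = k + 1 := by omega
    have hk1 : k + 3 - 2 - 1 = k := by omega
    rw [hk2]; simp only [Nat.add_sub_cancel]
    have hy0 : y u ≠ 0 := ne_of_gt hyu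
    push_cast
    field_simp
    ring
  intro s hs t ht
  have key := hconv.norm_image_sub_le_of_norm_hasFDerivWithin_le
    (f := fun t => y t ^ (k + 3 - 2) * (Real.cos (θ t) - H * y t))
    (C := 0) (fun u hu => (hF u hu).hasFDerivWithinAt) ?_ ht hs
  · have : ‖y s ^ (k + 3 - 2) * (Real.cos (θ s) - H * y s)
        - y t ^ (k + 3 - 2) * (Real.cos (θ t) - H * y t)‖ ≤ 0 := by
      simpa using key
    have := norm_le_zero_iff.mp this
    linarith [sub_eq_zero.mp this]
  · intro u hu
    simp
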